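/- Let g : Q → E* be monotone and ν-Hölder continuous with constant L_ν. Then ψ_δ(x, y) := ⟨g(y), x − y⟩ is a (δ, L(δ))-model for the variational inequality with L(δ) = (1/(2δ))^{(1−ν)/(1+ν)} L_ν^{2/(1+ν)}: it is linear (hence convex) in x, vanishes at x = y, satisfies ψ_δ(x,y) + ψ_δ(y,x) = ⟨g(y) − g(x), x − y⟩ ≤ 0 ≤ δ by monotonicity, and satisfies the generalized relative smoothness inequality ψ_δ(x,y) ≤ ψ_δ(x,z) + ψ_δ(z,y) + (L(δ)/2)‖x − z‖² + (L(δ)/2)‖z − y‖² + δ for all x, y, z ∈ Q. -/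
import Mathlib

open RealInnerProductSpace

lemma holder_interp (ν Lν δ : ℝ) (hν0 : 0 ≤ ν) (hν1 : ν ≤ 1) (hLν : 0 < Lν)
    (hδ : 0 < δ) (a b : ℝ) (ha : 0 ≤ a) (hb : 0 ≤ b) :
    Lν * a ^ ν * b ≤
      (1 / (2 * δ)) ^ ((1 - ν) / (1 + ν)) * Lν ^ ((2 : ℝ) / (1 + ν)) / 2 * b ^ 2
        + (1 / (2 * δ)) ^ ((1 - ν) / (1 + ν)) * Lν ^ ((2 : ℝ) / (1 + ν)) / 2 * a ^ 2
        + δ := by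
  have h2δ : (0:ℝ) < 2 * δ := by linarith
  have h1ν : (0:ℝ) < 1 + ν := by linarith
  set L : ℝ := (1 / (2 * δ)) ^ ((1 - ν) / (1 + ν)) * Lν ^ ((2 : ℝ) / (1 + ν)) with hLdef
  have hL : 0 < L := mul_pos (Real.rpow_pos_of_pos (by positivity) _)
    (Real.rpow_pos_of_pos hLν _)
  -- key power identity: L ^ (1+ν) * (2δ)^(1-ν) = Lν ^ 2
  have hLpow : L ^ (1 + ν) * (2 * δ) ^ (1 - ν) = Lν ^ (2:ℝ) := by
    rw [hLdef, Real.mul_rpow (by positivity) (by positivity),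
        ← Real.rpow_mul (by positivity), ← Real.rpow_mul hLν.le,
        div_mul_cancel₀ _ h1ν.ne', div_mul_cancel₀ _ h1ν.ne',
        one_div, Real.inv_rpow h2δ.le]
    have hpos : (0:ℝ) < (2 * δ) ^ (1 - ν) := Real.rpow_pos_of_pos h2δ _
    field_simp
  -- step B: (Lν * a^ν)^2 ≤ L^2 * a^2 + 2*L*δ
  have hB : (Lν * a ^ ν) ^ (2:ℕ) ≤ L ^ (2:ℕ) * a ^ (2:ℕ) + 2 * L * δ := by
    have hgm := Real.geom_mean_le_arith_mean2_weighted (w₁ := ν) (w₂ := 1 - ν)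
      (p₁ := L ^ (2:ℕ) * a ^ (2:ℕ)) (p₂ := 2 * L * δ)
      hν0 (by linarith) (by positivity) (by positivity) (by ring)
    have heq : (L ^ (2:ℕ) * a ^ (2:ℕ)) ^ ν * (2 * L * δ) ^ (1 - ν)
        = (Lν * a ^ ν) ^ (2:ℕ) := by
      rw [Real.mul_rpow (by positivity) (by positivity)]
      have h1 : (2 * L * δ) ^ (1 - ν) = L ^ (1 - ν) * (2 * δ) ^ (1 - ν) := by
        rw [← Real.mul_rpow hL.le h2δ.le]; ring_nf
      have h2 : (L ^ (2:ℕ)) ^ ν = L ^ (2 * ν) := by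
        rw [← Real.rpow_natCast L 2, ← Real.rpow_mul hL.le]; norm_num
      have h3 : (a ^ (2:ℕ)) ^ ν = (a ^ ν) ^ (2:ℕ) := by
        rw [← Real.rpow_natCast a 2, ← Real.rpow_mul ha,
            ← Real.rpow_natCast (a ^ ν) 2, ← Real.rpow_mul ha]
        norm_num [mul_comm]
      rw [h1, h2, h3]
      have h4 : L ^ (2 * ν) * L ^ (1 - ν) = L ^ (1 + ν) := by
        rw [← Real.rpow_add hL]; ring_nf
      calc L ^ (2 * ν) * (a ^ ν) ^ (2:ℕ) * (L ^ (1 - ν) * (2 * δ) ^ (1 - ν))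
          = (L ^ (2 * ν) * L ^ (1 - ν) * (2 * δ) ^ (1 - ν)) * (a ^ ν) ^ (2:ℕ) := by ring
        _ = Lν ^ (2:ℝ) * (a ^ ν) ^ (2:ℕ) := by rw [h4, hLpow]
        _ = (Lν * a ^ ν) ^ (2:ℕ) := by
            rw [show ((2:ℝ)) = ((2:ℕ):ℝ) by norm_num, Real.rpow_natCast]; ring
    rw [← heq]
    calc (L ^ (2:ℕ) * a ^ (2:ℕ)) ^ ν * (2 * L * δ) ^ (1 - ν)
        ≤ ν * (L ^ (2:ℕ) * a ^ (2:ℕ)) + (1 - ν) * (2 * L * δ) := hgm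
      _ ≤ L ^ (2:ℕ) * a ^ (2:ℕ) + 2 * L * δ := by
          nlinarith [mul_nonneg (by linarith : (0:ℝ) ≤ 1 - ν)
              (by positivity : (0:ℝ) ≤ L ^ (2:ℕ) * a ^ (2:ℕ)),
            mul_nonneg hν0 (by positivity : (0:ℝ) ≤ 2 * L * δ)]
  have haν : 0 ≤ a ^ ν := Real.rpow_nonneg ha _
  nlinarith [sq_nonneg (Lν * a ^ ν - L * b), hB, hL, mul_pos hL hδ]

/-- for a monotone `ν`-Hölder continuous operator `g`, the function
`ψ x y = ⟪g y, x - y⟫` is a `(δ, L(δ))`-model for the variational inequality, where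
`L(δ) = (1/(2δ))^((1-ν)/(1+ν)) Lν^(2/(1+ν))`. -/
theorem holder_operator_model
    {E : Type*} [NormedAddCommGroup E] [InnerProductSpace ℝ E]
    (Q : Set E) (hQ : Convex ℝ Q)
    (g : E → E) (ν Lν : ℝ) (hν : ν ∈ Set.Icc (0 : ℝ) 1) (hLν : 0 < Lν)
    (hmono : ∀ x ∈ Q, ∀ y ∈ Q, 0 ≤ ⟪g x - g y, x - y⟫)
    (hhold : ∀ x ∈ Q, ∀ y ∈ Q, ‖g x - g y‖ ≤ Lν * ‖x - y‖ ^ ν) :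
    ∀ δ > (0 : ℝ),
      (∀ y ∈ Q, ConvexOn ℝ Q fun x => ⟪g y, x - y⟫) ∧
      (∀ x ∈ Q, ⟪g x, x - x⟫ = 0) ∧
      (∀ x ∈ Q, ∀ y ∈ Q, ⟪g y, x - y⟫ + ⟪g x, y - x⟫ ≤ δ) ∧
      (∀ x ∈ Q, ∀ y ∈ Q, ∀ z ∈ Q,
        ⟪g y, x - y⟫ ≤ ⟪g z, x - z⟫ + ⟪g y, z - y⟫
          + (1 / (2 * δ)) ^ ((1 - ν) / (1 + ν)) * Lν ^ ((2 : ℝ) / (1 + ν)) / 2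
              * ‖x - z‖ ^ 2
          + (1 / (2 * δ)) ^ ((1 - ν) / (1 + ν)) * Lν ^ ((2 : ℝ) / (1 + ν)) / 2
              * ‖z - y‖ ^ 2
          + δ) := by
  obtain ⟨hν0, hν1⟩ := hν
  intro δ hδ
  refine ⟨?_, ?_, ?_, ?_⟩
  · -- convexity in x (the map is affine)
    intro y _
    refine ⟨hQ, fun u _ v _ a b ha hb hab => ?_⟩
    have h : a • u + b • v - y = a • (u - y) + b • (v - y) := by
      match_scalars <;> linarith
    dsimp only
    rw [h, inner_add_right, real_inner_smul_right, real_inner_smul_right,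
      smul_eq_mul, smul_eq_mul]
  · intro x _
    simp
  · -- weak monotonicity
    intro x hx y hy
    have h := hmono x hx y hy
    rw [inner_sub_left] at h
    have h2 : ⟪g x, y - x⟫ = -⟪g x, x - y⟫ := by
      rw [show y - x = -(x - y) by abel, inner_neg_right]
    linarith
  · -- relative smoothness
    intro x hx y hy z hz
    have hkey : ⟪g y, x - y⟫ - ⟪g z, x - z⟫ - ⟪g y, z - y⟫ = ⟪g y - g z, x - z⟫ := by
      simp only [inner_sub_left, inner_sub_right]; ring
    have h1 : ⟪g y - g z, x - z⟫ ≤ ‖g y - g z‖ * ‖x - z‖ := real_inner_le_norm _ _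
    have h2 : ‖g y - g z‖ ≤ Lν * ‖z - y‖ ^ ν := by
      rw [show z - y = -(y - z) by abel, norm_neg]
      exact hhold y hy z hz
    have h3 : ‖g y - g z‖ * ‖x - z‖ ≤ Lν * ‖z - y‖ ^ ν * ‖x - z‖ :=
      mul_le_mul_of_nonneg_right h2 (norm_nonneg _)
    have h4 := holder_interp ν Lν δ hν0 hν1 hLν hδ (‖z - y‖) (‖x - z‖)
      (norm_nonneg _) (norm_nonneg _)
    linarith
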